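/- Let n ≥ 1 be a natural number. The map l ↦ (k ↦ cos(2πlk/n)) from {0, 1, …, ⌈(n+1)/2⌉ − 1} to the space of functions ℤ/nℤ → ℂ is injective, and its range is exactly the cosine class COS(ℤ/nℤ). In particular COS(ℤ/nℤ) has exactly ⌈(n+1)/2⌉ elements, where ⌈·⌉ is the ceiling function. -/

import Mathlib

open Real

/-- The cosine class `COS(G)`: nonzero bounded continuous `φ : G → ℂ` satisfying the
d'Alembert equation `φ(x) φ(y) = (φ(x+y) + φ(x-y))/2`. -/
def CosClass (G : Type*) [AddCommGroup G] [TopologicalSpace G] : Set (G → ℂ) :=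
  {φ | Continuous φ ∧ (∃ C, ∀ x, ‖φ x‖ ≤ C) ∧ φ ≠ 0 ∧
    ∀ x y, φ x * φ y = (φ (x + y) + φ (x - y)) / 2}

/-- `ℤ/nℤ` carries the discrete topology. -/
instance (n : ℕ) : TopologicalSpace (ZMod n) := ⊥

instance (n : ℕ) : DiscreteTopology (ZMod n) := ⟨rfl⟩

/-- The function `k ↦ cos(2πlk/n)` on `ℤ/nℤ`, evaluated via integer representatives. -/
noncomputable def cosZMod (n : ℕ) (l : ℕ) : ZMod n → ℂ :=
  fun k => (Real.cos (2 * π * l * (ZMod.val k) / n) : ℂ)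

noncomputable def cosI (n : ℕ) (a : ℤ) : ℝ := Real.cos (2 * π * a / n)

lemma cosI_congr {n : ℕ} {a b : ℤ} (h : a ≡ b [ZMOD n]) :
    cosI n a = cosI n b := by
  obtain ⟨t, ht⟩ : (n : ℤ) ∣ b - a := h.dvd
  have hb : (b : ℝ) = (a : ℝ) + (n : ℝ) * (t : ℝ) := by
    have h2 : b = a + (n : ℤ) * t := by omega
    rw [h2]; push_cast; ring
  by_cases hn : n = 0
  · subst hn
    have : b = a := sub_eq_zero.mp (by simpa using ht)
    rw [this]
  have hn' : (n : ℝ) ≠ 0 := Nat.cast_ne_zero.mpr hn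
  unfold cosI
  rw [hb]
  rw [show 2 * π * ((a : ℝ) + n * t) / n = 2 * π * a / n + (t : ℝ) * (2 * π) from by
    field_simp]
  rw [Real.cos_add_int_mul_two_pi]

lemma cosI_neg (n : ℕ) (a : ℤ) : cosI n (-a) = cosI n a := by
  unfold cosI
  push_cast
  rw [show 2 * π * -(a:ℝ) / n = -(2 * π * a / n) from by ring, Real.cos_neg]

lemma cosI_dAlembert {n : ℕ} (a b : ℤ) :
    cosI n a * cosI n b = (cosI n (a + b) + cosI n (a - b)) / 2 := by
  unfold cosI
  push_cast
  rw [show 2 * π * ((a:ℝ) + b) / n = 2 * π * a / n + 2 * π * b / n from by ring,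
    show 2 * π * ((a:ℝ) - b) / n = 2 * π * a / n - 2 * π * b / n from by ring,
    Real.cos_add, Real.cos_sub]
  ring

lemma cosZMod_eq (n l : ℕ) (k : ZMod n) :
    cosZMod n l k = ((cosI n (l * k.val) : ℝ) : ℂ) := by
  unfold cosZMod cosI
  congr 2
  push_cast
  ring

lemma zmod_val_cast {n : ℕ} [NeZero n] (z : ZMod n) : ((z.val : ℕ) : ZMod n) = z :=
  ZMod.natCast_rightInverse z

lemma val_add_modeq {n : ℕ} [NeZero n] (x y : ZMod n) :
    ((x + y).val : ℤ) ≡ (x.val : ℤ) + (y.val : ℤ) [ZMOD n] := by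
  rw [← ZMod.intCast_eq_intCast_iff]
  push_cast
  rw [zmod_val_cast, zmod_val_cast, zmod_val_cast]

lemma val_sub_modeq {n : ℕ} [NeZero n] (x y : ZMod n) :
    ((x - y).val : ℤ) ≡ (x.val : ℤ) - (y.val : ℤ) [ZMOD n] := by
  rw [← ZMod.intCast_eq_intCast_iff]
  push_cast
  rw [zmod_val_cast, zmod_val_cast, zmod_val_cast]

lemma cosZMod_mem (n l : ℕ) (hn : 1 ≤ n) : cosZMod n l ∈ CosClass (ZMod n) := by
  haveI : NeZero n := ⟨by omega⟩
  refine ⟨continuous_of_discreteTopology, ⟨1, fun x => ?_⟩, ?_, fun x y => ?_⟩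
  · rw [cosZMod_eq]
    rw [Complex.norm_real]
    exact Real.abs_cos_le_one _
  · intro h
    have h0 := congrFun h 0
    rw [cosZMod_eq] at h0
    simp only [ZMod.val_zero, Nat.cast_zero, mul_zero] at h0
    unfold cosI at h0
    norm_num at h0
  · rw [cosZMod_eq, cosZMod_eq, cosZMod_eq, cosZMod_eq]
    rw [cosI_congr (Int.ModEq.mul_left (l : ℤ) (val_add_modeq x y)),
      cosI_congr (Int.ModEq.mul_left (l : ℤ) (val_sub_modeq x y))]
    rw [show (l : ℤ) * ((x.val : ℤ) + y.val) = l * x.val + l * y.val from by ring,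
      show (l : ℤ) * ((x.val : ℤ) - y.val) = l * x.val - l * y.val from by ring]
    exact_mod_cast cosI_dAlembert ((l : ℤ) * x.val) ((l : ℤ) * y.val)
lemma cosClass_sub (n : ℕ) (hn : 1 ≤ n) {φ : ZMod n → ℂ} (hφ : φ ∈ CosClass (ZMod n)) :
    ∃ l : ℕ, 2 * l ≤ n ∧ φ = cosZMod n l := by
  haveI : NeZero n := ⟨by omega⟩
  obtain ⟨-, -, hne, heq⟩ := hφ
  -- φ 0 = 1
  obtain ⟨x₀, hx₀⟩ : ∃ x, φ x ≠ 0 := by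
    by_contra h
    push_neg at h
    exact hne (funext fun x => h x)
  have φ0 : φ 0 = 1 := by
    have h := heq x₀ 0
    rw [add_zero, sub_zero] at h
    have h2 : φ x₀ * φ 0 = φ x₀ * 1 := by rw [mul_one]; linear_combination h
    exact mul_left_cancel₀ hx₀ h2
  set c : ℂ := φ 1 with hc
  obtain ⟨w, v, hwv, hsum⟩ : ∃ w v : ℂ, w * v = 1 ∧ w + v = 2 * c := by
    refine ⟨c + (c ^ 2 - 1) ^ ((2 : ℂ)⁻¹), c - (c ^ 2 - 1) ^ ((2 : ℂ)⁻¹), ?_, by ring⟩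
    have hs : ((c ^ 2 - 1) ^ ((2 : ℂ)⁻¹)) ^ 2 = c ^ 2 - 1 := by
      have := Complex.cpow_nat_inv_pow (c ^ 2 - 1) (two_ne_zero)
      simpa using this
    linear_combination -hs
  -- the recurrence
  have key : ∀ k : ℕ, φ ((k : ℕ) : ZMod n) = (w ^ k + v ^ k) / 2 ∧
      φ (((k + 1 : ℕ)) : ZMod n) = (w ^ (k + 1) + v ^ (k + 1)) / 2 := by
    intro k
    induction k with
    | zero =>
      constructor
      · simpa using φ0
      · norm_num
        rw [← hc]
        linear_combination -hsum / 2
    | succ k ih =>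
      refine ⟨ih.2, ?_⟩
      have h := heq (((k + 1 : ℕ)) : ZMod n) 1
      have e1 : (((k + 1 : ℕ)) : ZMod n) + 1 = ((k + 2 : ℕ) : ZMod n) := by push_cast; ring
      have e2 : (((k + 1 : ℕ)) : ZMod n) - 1 = ((k : ℕ) : ZMod n) := by push_cast; ring
      rw [e1, e2, ← hc] at h
      have ih1 := ih.1
      have ih2 := ih.2
      linear_combination (-2 : ℂ) * h - ih1 + 2 * c * ih2 -
        ((w ^ (k + 1) + v ^ (k + 1)) / 2) * hsum + ((w ^ k + v ^ k) / 2) * hwv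
  -- w ^ n = 1
  have e1 : w ^ n * v ^ n = 1 := by rw [← mul_pow, hwv, one_pow]
  have e2 : w ^ n + v ^ n = 2 := by
    have h1 := (key n).1
    rw [ZMod.natCast_self, φ0] at h1
    linear_combination -2 * h1
  have hwn : w ^ n = 1 := by
    have hsq : (w ^ n - 1) ^ 2 = 0 := by linear_combination w ^ n * e2 - e1
    have h2 := pow_eq_zero_iff (two_ne_zero) |>.mp hsq
    exact sub_eq_zero.mp h2
  -- w is an n-th root of unity
  obtain ⟨l, hln, hl⟩ := (Complex.isPrimitiveRoot_exp n (by omega)).eq_pow_of_pow_eq_one hwn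
  have hv : v = w⁻¹ := eq_inv_of_mul_eq_one_left (by rw [mul_comm]; exact hwv)
  have hn' : (n : ℂ) ≠ 0 := Nat.cast_ne_zero.mpr (by omega)
  have hψ : ∀ k : ℕ, (w ^ k + v ^ k) / 2
      = (((Real.cos (2 * π * ((l * k : ℕ) : ℝ) / n) : ℝ)) : ℂ) := by
    intro k
    have hwk : w ^ k = Complex.exp (((2 * π * ((l * k : ℕ) : ℝ) / n : ℝ) : ℂ) * Complex.I) := by
      rw [← hl, ← pow_mul, ← Complex.exp_nat_mul]
      congr 1
      push_cast
      field_simp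
    have hvk : v ^ k
        = Complex.exp ((-(2 * π * ((l * k : ℕ) : ℝ) / n : ℝ) : ℝ) * Complex.I) := by
      rw [hv, inv_pow, hwk, ← Complex.exp_neg]
      congr 1
      push_cast
      ring
    rw [hwk, hvk, Complex.exp_mul_I, Complex.exp_mul_I]
    push_cast
    simp only [Complex.cos_neg, Complex.sin_neg]
    ring
  -- fold l into [0, n/2]
  refine ⟨if 2 * l ≤ n then l else n - l, by split <;> omega, ?_⟩
  funext x
  have hx : ((x.val : ℕ) : ZMod n) = x := zmod_val_cast x
  have hφx : φ x = ((cosI n ((l : ℤ) * x.val) : ℝ) : ℂ) := by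
    have h1 := (key x.val).1
    rw [hx] at h1
    rw [h1, hψ x.val]
    norm_cast
  rw [cosZMod_eq, hφx]
  norm_cast
  split
  · rfl
  · have hle : l ≤ n := le_of_lt hln
    have hmod : ((n - l : ℕ) : ℤ) * (x.val : ℤ) ≡ -((l : ℤ) * x.val) [ZMOD n] := by
      have hcast : ((n - l : ℕ) : ℤ) = (n : ℤ) - l := by omega
      rw [Int.modEq_iff_dvd, hcast]
      exact ⟨-(x.val : ℤ), by ring⟩
    push_cast
    rw [cosI_congr hmod, cosI_neg]
lemma cosZMod_inj {n a b : ℕ} (hn : 1 ≤ n) (ha : 2 * a ≤ n) (hb : 2 * b ≤ n)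
    (h : cosZMod n a = cosZMod n b) : a = b := by
  rcases eq_or_lt_of_le hn with h1 | h1
  · omega
  · haveI : NeZero n := ⟨by omega⟩
    haveI : Fact (1 < n) := ⟨h1⟩
    have hval : (1 : ZMod n).val = 1 := ZMod.val_one n
    have h2 := congrFun h (1 : ZMod n)
    unfold cosZMod at h2
    rw [hval] at h2
    have h3 : Real.cos (2 * π * a * 1 / n) = Real.cos (2 * π * b * 1 / n) := by
      exact_mod_cast h2
    have hnpos : (0 : ℝ) < n := by positivity
    have hbound : ∀ m : ℕ, 2 * m ≤ n → 2 * π * (m : ℝ) * 1 / n ∈ Set.Icc 0 π := by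
      intro m hm
      constructor
      · positivity
      · rw [div_le_iff₀ hnpos]
        have : (2 * m : ℝ) ≤ n := by exact_mod_cast hm
        nlinarith [Real.pi_pos]
    have h4 := Real.injOn_cos (hbound a ha) (hbound b hb) h3
    have hπ : (0 : ℝ) < π := Real.pi_pos
    have h6 : 2 * π * (a : ℝ) * 1 / n = 2 * π * (b : ℝ) * 1 / n := h4
    field_simp at h6
    exact_mod_cast h6

lemma lt_ceil_iff (n l : ℕ) : l < ⌈((n : ℚ) + 1) / 2⌉₊ ↔ 2 * l ≤ n := by
  rw [Nat.lt_ceil, lt_div_iff₀ (by norm_num : (0 : ℚ) < 2)]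
  constructor
  · intro h
    have : l * 2 < n + 1 := by exact_mod_cast h
    omega
  · intro h
    have : l * 2 < n + 1 := by omega
    exact_mod_cast this

/-- For `n ≥ 1`, the map `l ↦ (k ↦ cos(2πlk/n))` from
`{0, 1, …, ⌈(n+1)/2⌉ − 1}` to the functions `ℤ/nℤ → ℂ` is injective and its range is
exactly `COS(ℤ/nℤ)`; in particular `COS(ℤ/nℤ)` has exactly `⌈(n+1)/2⌉` elements. -/
theorem cosClass_zmod (n : ℕ) (hn : 1 ≤ n) :
    Function.Injective (fun l : Fin ⌈((n : ℚ) + 1) / 2⌉₊ => cosZMod n (l : ℕ)) ∧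
    Set.range (fun l : Fin ⌈((n : ℚ) + 1) / 2⌉₊ => cosZMod n (l : ℕ))
      = CosClass (ZMod n) ∧
    Set.ncard (CosClass (ZMod n)) = ⌈((n : ℚ) + 1) / 2⌉₊ := by
  have hinj : Function.Injective
      (fun l : Fin ⌈((n : ℚ) + 1) / 2⌉₊ => cosZMod n (l : ℕ)) := by
    intro a b hab
    exact Fin.ext (cosZMod_inj hn ((lt_ceil_iff n a).mp a.isLt)
      ((lt_ceil_iff n b).mp b.isLt) hab)
  have hrange : Set.range (fun l : Fin ⌈((n : ℚ) + 1) / 2⌉₊ => cosZMod n (l : ℕ))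
      = CosClass (ZMod n) := by
    ext φ
    constructor
    · rintro ⟨l, rfl⟩
      exact cosZMod_mem n l hn
    · intro hφ
      obtain ⟨l, hl2, rfl⟩ := cosClass_sub n hn hφ
      exact ⟨⟨l, (lt_ceil_iff n l).mpr hl2⟩, rfl⟩
  refine ⟨hinj, hrange, ?_⟩
  rw [← hrange, ← Nat.card_coe_set_eq,
    ← Nat.card_congr (Equiv.ofInjective _ hinj), Nat.card_eq_fintype_card, Fintype.card_fin]
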